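/- Let t be a positive integer, G a finite simple graph, 𝒫 a partition of V(G), and P_1 ≠ P_2 two parts of 𝒫; let 𝒫' be the partition obtained from 𝒫 by merging P_1 and P_2 into P* = P_1 ∪ P_2. Let H be a nonempty connected red-induced subtrigraph of G/𝒫' with P* ∈ V(H) ∪ (R_{G/𝒫'}(V(H)) \ B_{G/𝒫'}(V(H))), and assume that the subgraph of the red graph ℛ(G/𝒫') induced on V(H) ∪ {P*} is connected and every spanning tree of it has at most t leaves. For j = 1, 2, let 𝒬_j = B_{G/𝒫}(P_j) ∩ (V(H) \ {P*}). Let F be the graph whose vertices are the parts (V(H) \ {P*}) ∪ {P_1, P_2}, with two parts adjacent exactly when they are joined by a black or a red edge of G/𝒫. Let 𝒪 ⊆ {P_1, P_2} ∪ 𝒬_1 ∪ 𝒬_2 satisfy, for each j ∈ {1, 2}: (i) if 𝒬_j ∩ 𝒪 ≠ ∅, then 𝒬_j ⊆ 𝒪; and (ii) if 𝒬_j \ 𝒪 ≠ ∅, then P_j ∈ 𝒪. Then the graph F − 𝒪 has at most t + 2 connected components. -/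

import Mathlib

open SimpleGraph

/-- `X` is complete to `Y` in `G`. -/
def IsCompleteTo {V : Type*} (G : SimpleGraph V) (X Y : Set V) : Prop :=
  ∀ x ∈ X, ∀ y ∈ Y, G.Adj x y

/-- `X` is anti-complete to `Y` in `G`. -/
def IsAnticompleteTo {V : Type*} (G : SimpleGraph V) (X Y : Set V) : Prop :=
  ∀ x ∈ X, ∀ y ∈ Y, ¬ G.Adj x y

/-- Distinct parts `X`, `Y` are joined by a black edge of the quotient trigraph. -/
def blackAdj {V : Type*} (G : SimpleGraph V) (X Y : Set V) : Prop :=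
  X ≠ Y ∧ IsCompleteTo G X Y

/-- Distinct parts `X`, `Y` are joined by a red edge of the quotient trigraph. -/
def redAdj {V : Type*} (G : SimpleGraph V) (X Y : Set V) : Prop :=
  X ≠ Y ∧ ¬ IsCompleteTo G X Y ∧ ¬ IsAnticompleteTo G X Y

/-- `B_{G/Prt}(X)`: the parts of `Prt` joined to `X` by a black edge. -/
def blackNbrs {V : Type*} (G : SimpleGraph V) (Prt : Set (Set V)) (X : Set V) :
    Set (Set V) :=
  {Y ∈ Prt | blackAdj G X Y}

/-- `B_{G/Prt}(𝒱)`: the parts of `Prt` outside `𝒱` joined by a black edge to a part of `𝒱`. -/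
def blackNbrsOfSet {V : Type*} (G : SimpleGraph V) (Prt : Set (Set V))
    (F : Set (Set V)) : Set (Set V) :=
  {Y ∈ Prt | Y ∉ F ∧ ∃ X ∈ F, blackAdj G X Y}

/-- `R_{G/Prt}(𝒱)`: the parts of `Prt` outside `𝒱` joined by a red edge to a part of `𝒱`. -/
def redNbrsOfSet {V : Type*} (G : SimpleGraph V) (Prt : Set (Set V))
    (F : Set (Set V)) : Set (Set V) :=
  {Y ∈ Prt | Y ∉ F ∧ ∃ X ∈ F, redAdj G X Y}

/-- The red graph induced on a set of parts. -/
def redGraphOn {V : Type*} (G : SimpleGraph V) (F : Set (Set V)) :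
    SimpleGraph ↥F where
  Adj X Y := redAdj G (X : Set V) (Y : Set V)
  symm := by
    constructor
    rintro X Y ⟨hne, hc, ha⟩
    refine ⟨hne.symm, fun hc' => hc fun x hx y hy => (hc' y hy x hx).symm,
      fun ha' => ha fun x hx y hy hadj => ha' y hy x hx hadj.symm⟩
  loopless := by
    constructor
    rintro X ⟨hne, -⟩
    exact hne rfl

/-- `F` is (the vertex set of) a connected red-induced subtrigraph of `G/Prt`. -/
def ConnectedRedInduced {V : Type*} (G : SimpleGraph V) (Prt : Set (Set V))
    (F : Set (Set V)) : Prop :=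
  F ⊆ Prt ∧ (∀ X ∈ F, ∀ Y ∈ F, ¬ blackAdj G X Y) ∧ (redGraphOn G F).Connected

/-- `T` has at most `t` leaves, a leaf being a vertex of degree 1. -/
def LeafCountLE {α : Type*} (T : SimpleGraph α) (t : ℕ) : Prop :=
  {v : α | (T.neighborSet v).ncard = 1}.ncard ≤ t

/-- Every spanning tree of `H` has at most `t` leaves. -/
def MaxLeafLE {α : Type*} (H : SimpleGraph α) (t : ℕ) : Prop :=
  ∀ T : SimpleGraph α, T ≤ H → T.IsTree → LeafCountLE T t

/-- The graph induced on a set of parts, with two distinct parts adjacent exactly when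
they are joined by a black or a red edge of the quotient trigraph. -/
def totalGraphOn {V : Type*} (G : SimpleGraph V) (F : Set (Set V)) :
    SimpleGraph ↥F where
  Adj X Y := blackAdj G (X : Set V) (Y : Set V) ∨ redAdj G (X : Set V) (Y : Set V)
  symm := by
    constructor
    rintro X Y (⟨hne, hc⟩ | ⟨hne, hc, ha⟩)
    · exact Or.inl ⟨hne.symm, fun x hx y hy => (hc y hy x hx).symm⟩
    · exact Or.inr ⟨hne.symm, fun hc' => hc fun x hx y hy => (hc' y hy x hx).symm,
        fun ha' => ha fun x hx y hy hadj => ha' y hy x hx hadj.symm⟩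
  loopless := by
    constructor
    rintro X (⟨hne, -⟩ | ⟨hne, -⟩) <;> exact hne rfl


section TreeAux

variable {α : Type*}

/-- Deleting a non-bridge edge preserves reachability. -/
lemma aux_reach_del {G : SimpleGraph α} {x y : α}
    (hr : (G \ fromEdgeSet {s(x, y)}).Reachable x y) :
    ∀ {a b : α}, G.Walk a b → (G \ fromEdgeSet {s(x, y)}).Reachable a b := by
  intro a b w
  induction w with
  | nil => exact Reachable.refl _
  | @cons a c b h p ih =>
    refine Reachable.trans ?_ ih
    by_cases he : s(a, c) = s(x, y)
    · rw [Sym2.eq_iff] at he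
      rcases he with ⟨rfl, rfl⟩ | ⟨rfl, rfl⟩
      · exact hr
      · exact hr.symm
    · refine Adj.reachable ?_
      rw [sdiff_adj, fromEdgeSet_adj]
      exact ⟨h, fun hh => he (Set.mem_singleton_iff.mp hh.1)⟩

lemma aux_conn_del {G : SimpleGraph α} (hG : G.Connected) {x y : α}
    (hr : (G \ fromEdgeSet {s(x, y)}).Reachable x y) :
    (G \ fromEdgeSet {s(x, y)}).Connected := by
  rw [connected_iff]
  exact ⟨fun a b => (hG.preconnected a b).elim fun w => aux_reach_del hr w, hG.nonempty⟩

/-- Every cycle contains an edge avoiding a prescribed vertex `r`. -/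
lemma aux_cycle_avoid {G : SimpleGraph α} {v : α} (c : G.Walk v v) (hc : c.IsCycle) (r : α) :
    ∃ x y, x ≠ r ∧ y ≠ r ∧ ∃ (u : α) (p : G.Walk u u), p.IsCycle ∧ s(x, y) ∈ p.edges := by
  classical
  by_cases hr : r ∈ c.support
  · have hc' : (c.rotate r hr).IsCycle := hc.rotate hr
    generalize c.rotate r hr = c' at hc'
    cases c' with
    | nil => exact (hc'.ne_nil rfl).elim
    | @cons _ x _ h₁ q =>
      have hcyc := hc'
      rw [Walk.cons_isCycle_iff] at hc'
      cases q with
      | nil => exact (G.loopless.irrefl r h₁).elim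
      | @cons _ y _ h₂ q₂ =>
        have hxr : x ≠ r := h₁.ne'
        have hyr : y ≠ r := by
          rintro rfl
          rw [Walk.cons_isPath_iff] at hc'
          have hq₂ : q₂ = Walk.nil := (Walk.isPath_iff_eq_nil (p := q₂)).mp hc'.1.1
          have h3 := hcyc.three_le_length
          rw [hq₂] at h3
          simp at h3
        exact ⟨x, y, hxr, hyr, r, _, hcyc, by simp⟩
  · cases c with
    | nil => exact (hc.ne_nil rfl).elim
    | @cons _ x _ h q =>
      have hvr : v ≠ r := fun h' => hr (h' ▸ Walk.start_mem_support _)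
      have hxs : x ∈ (Walk.cons h q).support := by
        rw [Walk.support_cons]
        exact List.mem_cons_of_mem _ (Walk.start_mem_support q)
      have hxr : x ≠ r := fun h' => hr (h' ▸ hxs)
      exact ⟨v, x, hvr, hxr, v, _, hc, by simp⟩

/-- A connected graph has a spanning tree containing a prescribed star at `r`. -/
lemma aux_exists_tree_star [Finite α] :
    ∀ (n : ℕ) (R : SimpleGraph α), R.edgeSet.ncard ≤ n → R.Connected →
    ∀ (r : α) (D : Set α), (∀ d ∈ D, R.Adj r d) →
    ∃ T, T ≤ R ∧ T.IsTree ∧ ∀ d ∈ D, T.Adj r d := by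
  intro n
  induction n with
  | zero =>
    intro R hn hconn r D hD
    by_cases hac : R.IsAcyclic
    · exact ⟨R, le_rfl, ⟨hconn, hac⟩, hD⟩
    · exfalso
      unfold IsAcyclic at hac
      push_neg at hac
      obtain ⟨v, c, hcyc⟩ := hac
      obtain ⟨x, y, -, -, u, p, hp, hep⟩ := aux_cycle_avoid c hcyc r
      have he : s(x, y) ∈ R.edgeSet := p.edges_subset_edgeSet hep
      have := (Set.ncard_pos (Set.toFinite _)).mpr ⟨_, he⟩
      omega
  | succ n ih =>
    intro R hn hconn r D hD
    by_cases hac : R.IsAcyclic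
    · exact ⟨R, le_rfl, ⟨hconn, hac⟩, hD⟩
    · unfold IsAcyclic at hac
      push_neg at hac
      obtain ⟨v, c, hcyc⟩ := hac
      obtain ⟨x, y, hxr, hyr, u, p, hp, hep⟩ := aux_cycle_avoid c hcyc r
      have hadj : R.Adj x y := p.adj_of_mem_edges hep
      have hreach : (R \ fromEdgeSet {s(x, y)}).Reachable x y :=
        (adj_and_reachable_delete_edges_iff_exists_cycle.mpr ⟨u, p, hp, hep⟩).2
      have hconn' := aux_conn_del hconn hreach
      have hedges : (R \ fromEdgeSet {s(x, y)}).edgeSet = R.edgeSet \ {s(x, y)} := by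
        rw [edgeSet_sdiff, edgeSet_fromEdgeSet, edgeSet_sdiff_sdiff_isDiag]
      have hmemE : s(x, y) ∈ R.edgeSet := hadj
      have hcard : (R \ fromEdgeSet {s(x, y)}).edgeSet.ncard ≤ n := by
        rw [hedges]
        have := Set.ncard_diff_singleton_add_one hmemE (Set.toFinite _)
        omega
      have hD' : ∀ d ∈ D, (R \ fromEdgeSet {s(x, y)}).Adj r d := by
        intro d hd
        rw [sdiff_adj, fromEdgeSet_adj]
        refine ⟨hD d hd, ?_⟩
        rintro ⟨hmem, -⟩
        rw [Set.mem_singleton_iff, Sym2.eq_iff] at hmem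
        rcases hmem with ⟨rfl, rfl⟩ | ⟨rfl, rfl⟩
        · exact hxr rfl
        · exact hyr rfl
      obtain ⟨T, hT1, hT2, hT3⟩ := ih _ hcard hconn' r D hD'
      exact ⟨T, hT1.trans sdiff_le, hT2, hT3⟩

end TreeAux


section TreeAux2

variable {α : Type*}

/-- The graph `T` with all edges meeting `B` removed. -/
def auxDelG (T : SimpleGraph α) (B : Set α) : SimpleGraph α where
  Adj a b := T.Adj a b ∧ a ∉ B ∧ b ∉ B
  symm := ⟨fun a b h => ⟨h.1.symm, h.2.2, h.2.1⟩⟩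
  loopless := ⟨fun a h => T.loopless.irrefl a h.1⟩

lemma auxDelG_end_not_mem {T : SimpleGraph α} {B : Set α} :
    ∀ {a b : α}, (auxDelG T B).Walk a b → a ∉ B → b ∉ B := by
  intro a b w
  induction w with
  | nil => exact id
  | cons h p ih => exact fun _ => ih h.2.2

lemma aux_dist_ne_of_adj {T : SimpleGraph α} (hT : T.IsTree) (r : α) {y z : α}
    (h : T.Adj y z) : T.dist r y ≠ T.dist r z := by
  classical
  intro heq
  have hconn := hT.isConnected
  obtain ⟨q, hqp, hql⟩ := hconn.exists_path_of_dist r z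
  obtain ⟨p, hpp, hpl⟩ := hconn.exists_path_of_dist r y
  have hyq : y ∉ q.support := by
    intro hy
    have h1 : T.dist r y ≤ (q.takeUntil y hy).length := dist_le _
    have h2 : (q.takeUntil y hy).length + (q.dropUntil y hy).length = q.length := by
      rw [← Walk.length_append, Walk.take_spec]
    have h4 : T.dist y z ≤ (q.dropUntil y hy).length := dist_le _
    have h5 : T.dist y z = 1 := dist_eq_one_iff_adj.mpr h
    omega
  have hcpath : (q.concat h.symm).IsPath := by
    rw [Walk.isPath_def, Walk.support_concat]
    exact List.Nodup.append hqp.support_nodup (List.nodup_singleton y)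
      (fun a ha hb => hyq (List.mem_singleton.mp hb ▸ ha))
  obtain ⟨w₀, -, huniq⟩ := hT.existsUnique_path r y
  have e1 : p = w₀ := huniq p hpp
  have e2 : q.concat h.symm = w₀ := huniq _ hcpath
  have e3 : p.length = (q.concat h.symm).length := by rw [e1, e2]
  rw [hpl, Walk.length_concat, hql] at e3
  omega

lemma aux_parent_unique {T : SimpleGraph α} (hT : T.IsTree) (r : α) {y z₁ z₂ : α}
    (h₁ : T.Adj y z₁) (h₂ : T.Adj y z₂)
    (hd₁ : T.dist r z₁ + 1 = T.dist r y) (hd₂ : T.dist r z₂ + 1 = T.dist r y) :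
    z₁ = z₂ := by
  classical
  have hconn := hT.isConnected
  obtain ⟨q₁, hq₁p, hq₁l⟩ := hconn.exists_path_of_dist r z₁
  obtain ⟨q₂, hq₂p, hq₂l⟩ := hconn.exists_path_of_dist r z₂
  have hy₁ : y ∉ q₁.support := by
    intro hy
    have ha : T.dist r y ≤ (q₁.takeUntil y hy).length := dist_le _
    have hb := Walk.length_takeUntil_le q₁ hy
    omega
  have hy₂ : y ∉ q₂.support := by
    intro hy
    have ha : T.dist r y ≤ (q₂.takeUntil y hy).length := dist_le _
    have hb := Walk.length_takeUntil_le q₂ hy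
    omega
  have hp₁ : (q₁.concat h₁.symm).IsPath := by
    rw [Walk.isPath_def, Walk.support_concat]
    exact List.Nodup.append hq₁p.support_nodup (List.nodup_singleton y)
      (fun a ha hb => hy₁ (List.mem_singleton.mp hb ▸ ha))
  have hp₂ : (q₂.concat h₂.symm).IsPath := by
    rw [Walk.isPath_def, Walk.support_concat]
    exact List.Nodup.append hq₂p.support_nodup (List.nodup_singleton y)
      (fun a ha hb => hy₂ (List.mem_singleton.mp hb ▸ ha))
  obtain ⟨w₀, -, huniq⟩ := hT.existsUnique_path r y
  have e : q₁.concat h₁.symm = q₂.concat h₂.symm := (huniq _ hp₁).trans (huniq _ hp₂).symm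
  obtain ⟨hv, -⟩ := Walk.concat_inj e
  exact hv

/-- In a tree with a star at `r` over `D`, every vertex outside `insert r D` reaches
a leaf of `T` within the graph with `insert r D` deleted. -/
lemma aux_leaf_reach [Finite α] {T : SimpleGraph α} (hT : T.IsTree) (r : α) (D : Set α)
    (hD : ∀ d ∈ D, T.Adj r d) {x : α} (hx : x ∉ insert r D) :
    ∃ l, (T.neighborSet l).ncard = 1 ∧ (auxDelG T (insert r D)).Reachable x l := by
  classical
  have hconn := hT.isConnected
  obtain ⟨y, hyA, hymax⟩ := Set.exists_max_image {y | (auxDelG T (insert r D)).Reachable x y}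
    (fun z => T.dist r z) (Set.toFinite _) ⟨x, Reachable.refl x⟩
  have hyB : y ∉ insert r D := by
    obtain ⟨w⟩ := hyA
    exact auxDelG_end_not_mem w hx
  have hyr : y ≠ r := fun h => hyB (h ▸ Set.mem_insert r D)
  have hd1 : 0 < T.dist r y := hconn.pos_dist_of_ne (Ne.symm hyr)
  obtain ⟨q, hqp, hql⟩ := hconn.exists_path_of_dist r y
  obtain ⟨p₀, hadj, q', hq'⟩ := q.reverse.exists_eq_cons_of_ne hyr
  have hq'len : q'.length + 1 = T.dist r y := by
    have h1 := congrArg Walk.length hq'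
    rw [Walk.length_reverse, hql, Walk.length_cons] at h1
    omega
  have hdp₀ : T.dist r p₀ + 1 = T.dist r y := by
    have h1 : T.dist r p₀ ≤ q'.reverse.length := dist_le _
    rw [Walk.length_reverse] at h1
    have h2 := hconn.dist_triangle (u := r) (v := p₀) (w := y)
    have h3 : T.dist p₀ y = 1 := dist_eq_one_iff_adj.mpr hadj.symm
    have h4 := aux_dist_ne_of_adj hT r hadj
    omega
  refine ⟨y, ?_, hyA⟩
  have hset : T.neighborSet y = {p₀} := by
    apply Set.eq_singleton_iff_unique_mem.mpr
    refine ⟨hadj, ?_⟩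
    intro z hz
    have hzadj : T.Adj y z := hz
    have hne := aux_dist_ne_of_adj hT r hzadj
    have hz1 : T.dist r z ≤ T.dist r y + 1 := by
      have := hconn.dist_triangle (u := r) (v := y) (w := z)
      have h3 : T.dist y z = 1 := dist_eq_one_iff_adj.mpr hzadj
      omega
    have hz2 : T.dist r y ≤ T.dist r z + 1 := by
      have := hconn.dist_triangle (u := r) (v := z) (w := y)
      have h3 : T.dist z y = 1 := dist_eq_one_iff_adj.mpr hzadj.symm
      omega
    have hcases : T.dist r z + 1 = T.dist r y ∨ T.dist r z = T.dist r y + 1 := by omega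
    rcases hcases with hcase | hcase
    · exact aux_parent_unique hT r hzadj hadj hcase hdp₀
    · exfalso
      have hzB : z ∉ insert r D := by
        intro hzB'
        rcases Set.mem_insert_iff.mp hzB' with rfl | hzD
        · rw [dist_self] at hcase; omega
        · have : T.dist r z = 1 := dist_eq_one_iff_adj.mpr (hD z hzD)
          omega
      have hzA : z ∈ {y | (auxDelG T (insert r D)).Reachable x y} :=
        hyA.trans (Adj.reachable ⟨hzadj, hyB, hzB⟩)
      have := hymax z hzA
      omega
  rw [hset]
  exact Set.ncard_singleton p₀

end TreeAux2

theorem stmt15 {V : Type*} [Fintype V] (t : ℕ) (ht : 0 < t) (G : SimpleGraph V)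
    (Prt : Set (Set V)) (hpart : Setoid.IsPartition Prt)
    (P₁ P₂ : Set V) (hP₁ : P₁ ∈ Prt) (hP₂ : P₂ ∈ Prt) (hP₁₂ : P₁ ≠ P₂)
    (Prt' : Set (Set V)) (hPrt' : Prt' = insert (P₁ ∪ P₂) (Prt \ {P₁, P₂}))
    (𝒱 : Set (Set V)) (h𝒱 : 𝒱.Nonempty)
    (hH : ConnectedRedInduced G Prt' 𝒱)
    (hPstar : P₁ ∪ P₂ ∈ 𝒱 ∨
      (P₁ ∪ P₂ ∈ redNbrsOfSet G Prt' 𝒱 ∧ P₁ ∪ P₂ ∉ blackNbrsOfSet G Prt' 𝒱))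
    (hconn : (redGraphOn G (𝒱 ∪ {P₁ ∪ P₂})).Connected)
    (hleaf : MaxLeafLE (redGraphOn G (𝒱 ∪ {P₁ ∪ P₂})) t)
    (𝒪 : Set (Set V))
    (h𝒪 : 𝒪 ⊆ {P₁, P₂} ∪ (blackNbrs G Prt P₁ ∩ (𝒱 \ {P₁ ∪ P₂}))
      ∪ (blackNbrs G Prt P₂ ∩ (𝒱 \ {P₁ ∪ P₂})))
    (h𝒪₁ : (𝒪 ∩ (blackNbrs G Prt P₁ ∩ (𝒱 \ {P₁ ∪ P₂}))).Nonempty →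
      blackNbrs G Prt P₁ ∩ (𝒱 \ {P₁ ∪ P₂}) ⊆ 𝒪)
    (h𝒪₂ : (𝒪 ∩ (blackNbrs G Prt P₂ ∩ (𝒱 \ {P₁ ∪ P₂}))).Nonempty →
      blackNbrs G Prt P₂ ∩ (𝒱 \ {P₁ ∪ P₂}) ⊆ 𝒪)
    (h𝒪₁' : ((blackNbrs G Prt P₁ ∩ (𝒱 \ {P₁ ∪ P₂})) \ 𝒪).Nonempty → P₁ ∈ 𝒪)
    (h𝒪₂' : ((blackNbrs G Prt P₂ ∩ (𝒱 \ {P₁ ∪ P₂})) \ 𝒪).Nonempty → P₂ ∈ 𝒪) :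
    Nat.card
      ((totalGraphOn G (((𝒱 \ {P₁ ∪ P₂}) ∪ {P₁, P₂}) \ 𝒪)).ConnectedComponent)
      ≤ t + 2 := by
  classical
  have hne : ∀ X ∈ Prt, X.Nonempty := fun X hX =>
    Set.nonempty_iff_ne_empty.mpr (fun h => hpart.1 (h ▸ hX))
  have hdisj : ∀ X ∈ Prt, ∀ Y ∈ Prt, X ≠ Y → ∀ a, a ∈ X → a ∈ Y → False := by
    intro X hX Y hY hXY a haX haY
    obtain ⟨b, -, hbu⟩ := hpart.2 a
    exact hXY ((hbu X ⟨hX, haX⟩).trans (hbu Y ⟨hY, haY⟩).symm)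
  set Pst : Set V := P₁ ∪ P₂ with hPstdef
  have hPstP1 : Pst ≠ P₁ := by
    intro h
    obtain ⟨x, hx⟩ := hne P₂ hP₂
    exact hdisj P₁ hP₁ P₂ hP₂ hP₁₂ x (h ▸ Set.mem_union_right P₁ hx) hx
  have hPstP2 : Pst ≠ P₂ := by
    intro h
    obtain ⟨x, hx⟩ := hne P₁ hP₁
    exact hdisj P₂ hP₂ P₁ hP₁ hP₁₂.symm x (h ▸ Set.mem_union_left P₂ hx) hx
  have hVPrt : ∀ Q ∈ 𝒱, Q ≠ Pst → Q ∈ Prt ∧ Q ≠ P₁ ∧ Q ≠ P₂ := by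
    intro Q hQ hQPst
    have h1 := hH.1 hQ
    rw [hPrt'] at h1
    rcases Set.mem_insert_iff.mp h1 with h2 | h2
    · exact absurd h2 hQPst
    · exact ⟨h2.1, fun h3 => h2.2 (by simp [h3]), fun h3 => h2.2 (by simp [h3])⟩
  have hP1notV : P₁ ∉ 𝒱 := by
    intro h
    exact (hVPrt P₁ h (Ne.symm hPstP1)).2.1 rfl
  have hP2notV : P₂ ∉ 𝒱 := by
    intro h
    exact (hVPrt P₂ h (Ne.symm hPstP2)).2.2 rfl
  have hstar : ∀ Q, Q ∈ 𝒪 → Q ≠ P₁ → Q ≠ P₂ → Q ∈ 𝒱 ∧ Q ≠ Pst ∧ redAdj G Pst Q := by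
    intro Q hQ hQ1 hQ2
    have hQ' := h𝒪 hQ
    have hmain2 : (Q ∈ blackNbrs G Prt P₁ ∨ Q ∈ blackNbrs G Prt P₂) ∧ Q ∈ 𝒱 \ {Pst} := by
      rcases hQ' with (h | h) | h
      · rcases Set.mem_insert_iff.mp h with h2 | h2
        · exact absurd h2 hQ1
        · exact absurd (Set.mem_singleton_iff.mp h2) hQ2
      · exact ⟨Or.inl h.1, h.2⟩
      · exact ⟨Or.inr h.1, h.2⟩
    obtain ⟨hbn, hQV, hQPst'⟩ := hmain2
    have hQPst : Q ≠ Pst := fun h => hQPst' (by simp [h])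
    obtain ⟨hQPrt, -, -⟩ := hVPrt Q hQV hQPst
    have hQne : Q.Nonempty := hne Q hQPrt
    have hPstQ : Pst ≠ Q := Ne.symm hQPst
    have hnanti : ¬ IsAnticompleteTo G Pst Q := by
      rcases hbn with h | h
      · obtain ⟨x, hx⟩ := hne P₁ hP₁
        obtain ⟨q0, hq0⟩ := hQne
        exact fun hanti => hanti x (Set.mem_union_left _ hx) q0 hq0 (h.2.2 x hx q0 hq0)
      · obtain ⟨x, hx⟩ := hne P₂ hP₂
        obtain ⟨q0, hq0⟩ := hQne
        exact fun hanti => hanti x (Set.mem_union_right _ hx) q0 hq0 (h.2.2 x hx q0 hq0)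
    have hncomp : ¬ IsCompleteTo G Pst Q := by
      intro hcompl
      have hblack : blackAdj G Q Pst := ⟨hQPst, fun q hq p hp => (hcompl p hp q hq).symm⟩
      rcases hPstar with hmem | ⟨hred, hnb⟩
      · exact hH.2.1 Pst hmem Q hQV ⟨hPstQ, hcompl⟩
      · exact hnb ⟨by rw [hPrt']; exact Set.mem_insert _ _, hred.2.1, Q, hQV, hblack⟩
    exact ⟨hQV, hQPst, hPstQ, hncomp, hnanti⟩
  set W : Set (Set V) := 𝒱 ∪ {Pst} with hWdef
  set R : SimpleGraph ↥W := redGraphOn G W with hRdef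
  have pwmem : Pst ∈ W := Set.mem_union_right _ rfl
  set pw : ↥W := ⟨Pst, pwmem⟩ with hpwdef
  set D : Set ↥W := {w : ↥W | w.val ∈ 𝒪 \ {P₁, P₂}} with hDdef
  have hDadj : ∀ d ∈ D, R.Adj pw d := by
    intro d hd
    have hd1 : d.val ≠ P₁ := fun h => hd.2 (by simp [h])
    have hd2 : d.val ≠ P₂ := fun h => hd.2 (by simp [h])
    obtain ⟨-, -, hred⟩ := hstar d.val hd.1 hd1 hd2
    exact hred
  obtain ⟨T, hTR, hTtree, hTstar⟩ :=
    aux_exists_tree_star R.edgeSet.ncard R le_rfl hconn pw D hDadj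
  have hLcard : {v : ↥W | (T.neighborSet v).ncard = 1}.ncard ≤ t := hleaf T hTR hTtree
  set S : Set (Set V) := ((𝒱 \ {Pst}) ∪ {P₁, P₂}) \ 𝒪 with hSdef
  set F : SimpleGraph ↥S := totalGraphOn G S with hFdef
  set B : Set ↥W := insert pw D with hBdef
  have memS : ∀ w : ↥W, w ∉ B → w.val ∈ S := by
    intro w hw
    have hwPst : w.val ≠ Pst := by
      intro h
      exact hw (Set.mem_insert_iff.mpr (Or.inl (Subtype.ext h)))
    have hwV : w.val ∈ 𝒱 := by
      rcases (w.2 : w.val ∈ 𝒱 ∪ {Pst}) with h | h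
      · exact h
      · exact absurd (Set.mem_singleton_iff.mp h) hwPst
    have hwO : w.val ∉ 𝒪 := by
      intro hO
      refine hw (Set.mem_insert_of_mem _ ?_)
      refine ⟨hO, ?_⟩
      intro hmem
      rcases Set.mem_insert_iff.mp hmem with h | h
      · exact hP1notV (h ▸ hwV)
      · exact hP2notV ((Set.mem_singleton_iff.mp h) ▸ hwV)
    exact Set.mem_diff_of_mem
      (Set.mem_union_left _ ⟨hwV, fun hh => hwPst (Set.mem_singleton_iff.mp hh)⟩) hwO
  have key : ∀ (a b : ↥W) (wk : (auxDelG T B).Walk a b) (ha : a ∉ B),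
      ∃ hb : b ∉ B, F.Reachable ⟨a.val, memS a ha⟩ ⟨b.val, memS b hb⟩ := by
    intro a b wk
    induction wk with
    | nil => exact fun ha => ⟨ha, Reachable.refl _⟩
    | @cons a c b h p ih =>
      intro ha
      obtain ⟨hb, hr⟩ := ih h.2.2
      refine ⟨hb, Reachable.trans (Adj.reachable ?_) hr⟩
      exact Or.inr (hTR h.1)
  have hmain : ∀ x : ↥S, x.val ≠ P₁ → x.val ≠ P₂ →
      ∃ l : ↥W, (T.neighborSet l).ncard = 1 ∧
        ∃ (w : ↥W) (hwB : w ∉ B), w.val = x.val ∧ (auxDelG T B).Reachable w l := by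
    intro x hx1 hx2
    have hxS : x.val ∈ ((𝒱 \ {Pst}) ∪ {P₁, P₂}) \ 𝒪 := x.2
    have hxO : x.val ∉ 𝒪 := hxS.2
    have hxV : x.val ∈ 𝒱 \ {Pst} := by
      rcases hxS.1 with h | h
      · exact h
      · exfalso
        rcases Set.mem_insert_iff.mp h with h2 | h2
        · exact hx1 h2
        · exact hx2 (Set.mem_singleton_iff.mp h2)
    have hwW : x.val ∈ W := Set.mem_union_left _ hxV.1
    have hwB : (⟨x.val, hwW⟩ : ↥W) ∉ B := by
      intro hB'
      rcases Set.mem_insert_iff.mp hB' with h | h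
      · exact hxV.2 (Set.mem_singleton_iff.mpr (congrArg Subtype.val h))
      · exact hxO h.1
    obtain ⟨l, hl1, hl2⟩ := aux_leaf_reach hTtree pw D hTstar hwB
    exact ⟨l, hl1, ⟨x.val, hwW⟩, hwB, rfl, hl2⟩
  have hcount : Nat.card F.ConnectedComponent ≤
      Nat.card (↥{v : ↥W | (T.neighborSet v).ncard = 1} ⊕ Fin 2) := by
    apply Nat.card_le_card_of_injective
      (f := fun c : F.ConnectedComponent =>
        if h1 : (Quot.out c).val = P₁ then (Sum.inr 0 : ↥{v : ↥W | (T.neighborSet v).ncard = 1} ⊕ Fin 2)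
        else if h2 : (Quot.out c).val = P₂ then Sum.inr 1
        else Sum.inl ⟨Classical.choose (hmain (Quot.out c) h1 h2),
          (Classical.choose_spec (hmain (Quot.out c) h1 h2)).1⟩)
    intro c₁ c₂ hEq
    simp only at hEq
    have outeq : Quot.out c₁ = Quot.out c₂ → c₁ = c₂ := by
      intro h
      exact ((Quot.out_eq c₁).symm.trans (congrArg (Quot.mk F.Reachable) h)).trans
        (Quot.out_eq c₂)
    by_cases h11 : (Quot.out c₁).val = P₁
    · rw [dif_pos h11] at hEq
      by_cases h21 : (Quot.out c₂).val = P₁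
      · exact outeq (Subtype.ext (h11.trans h21.symm))
      · rw [dif_neg h21] at hEq
        by_cases h22 : (Quot.out c₂).val = P₂
        · rw [dif_pos h22] at hEq; simp at hEq
        · rw [dif_neg h22] at hEq; simp at hEq
    · rw [dif_neg h11] at hEq
      by_cases h12 : (Quot.out c₁).val = P₂
      · rw [dif_pos h12] at hEq
        by_cases h21 : (Quot.out c₂).val = P₁
        · rw [dif_pos h21] at hEq; simp at hEq
        · rw [dif_neg h21] at hEq
          by_cases h22 : (Quot.out c₂).val = P₂
          · rw [dif_pos h22] at hEq
            exact outeq (Subtype.ext (h12.trans h22.symm))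
          · rw [dif_neg h22] at hEq; simp at hEq
      · rw [dif_neg h12] at hEq
        by_cases h21 : (Quot.out c₂).val = P₁
        · rw [dif_pos h21] at hEq; simp at hEq
        · rw [dif_neg h21] at hEq
          by_cases h22 : (Quot.out c₂).val = P₂
          · rw [dif_pos h22] at hEq; simp at hEq
          · rw [dif_neg h22] at hEq
            simp only [Sum.inl.injEq, Subtype.mk.injEq] at hEq
            obtain ⟨-, w₁, hw₁B, hw₁val, hw₁r⟩ :=
              Classical.choose_spec (hmain (Quot.out c₁) h11 h12)
            obtain ⟨-, w₂, hw₂B, hw₂val, hw₂r⟩ :=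
              Classical.choose_spec (hmain (Quot.out c₂) h21 h22)
            rw [← hEq] at hw₂r
            obtain ⟨wk⟩ := hw₁r.trans hw₂r.symm
            obtain ⟨hb2, hF⟩ := key w₁ w₂ wk hw₁B
            have e₁ : (⟨w₁.val, memS w₁ hw₁B⟩ : ↥S) = Quot.out c₁ := Subtype.ext hw₁val
            have e₂ : (⟨w₂.val, memS w₂ hw₂B⟩ : ↥S) = Quot.out c₂ := Subtype.ext hw₂val
            rw [e₁, e₂] at hF
            exact ((Quot.out_eq c₁).symm.trans (ConnectedComponent.sound hF)).trans
              (Quot.out_eq c₂)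
  have hfin : Nat.card (↥{v : ↥W | (T.neighborSet v).ncard = 1} ⊕ Fin 2)
      = {v : ↥W | (T.neighborSet v).ncard = 1}.ncard + 2 := by
    rw [Nat.card_sum, Nat.card_coe_set_eq, Nat.card_eq_fintype_card, Fintype.card_fin]
  omega
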